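/- arXiv:1512.03832 — 2 statements merged into one kernel-verified Lean document; each statement's English description precedes it below -/
import Mathlib

section
/- With u_g the state defined by the coercive variational equality and p_g ∈ V₀ the adjoint state defined by a(p_g, v) = ⟨u_g - z_d, ι v⟩_H for all v ∈ V₀, the map g ↦ p_g (viewed in H via ι) is strictly monotone in the sense that ⟨ι p_{g₂} - ι p_{g₁}, g₂ - g₁⟩_H = ‖ι u_{g₂} - ι u_{g₁}‖²_H ≥ 0 for all g₁, g₂ ∈ H. -/
open scoped RealInnerProductSpace

/-- strict monotonicity of the adjoint-state map:
`⟪ι p_{g₂} - ι p_{g₁}, g₂ - g₁⟫ = ‖ι u_{g₂} - ι u_{g₁}‖² ≥ 0`. -/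
theorem adjoint_state_strictly_monotone
    {V H : Type*} [NormedAddCommGroup V] [InnerProductSpace ℝ V] [CompleteSpace V]
    [NormedAddCommGroup H] [InnerProductSpace ℝ H] [CompleteSpace H]
    (V₀ : Submodule ℝ V) (hV₀ : IsClosed (V₀ : Set V))
    (a : V →ₗ[ℝ] V →ₗ[ℝ] ℝ) (Ca : ℝ)
    (ha_cont : ∀ u v : V, |a u v| ≤ Ca * ‖u‖ * ‖v‖)
    (ha_symm : ∀ u v : V, a u v = a v u)
    (l : ℝ) (hl : 0 < l)
    (ha_coerc : ∀ v ∈ V₀, l * ‖v‖ ^ 2 ≤ a v v)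
    (ι : V →L[ℝ] H) (L : V →L[ℝ] ℝ) (b : V) (zd : H)
    (u : H → V) (p : H → V)
    (hu_mem : ∀ g : H, u g - b ∈ V₀)
    (hu_eq : ∀ g : H, ∀ v ∈ V₀, a (u g) v = ⟪g, ι v⟫ - L v)
    (hp_mem : ∀ g : H, p g ∈ V₀)
    (hp_eq : ∀ g : H, ∀ v ∈ V₀, a (p g) v = ⟪ι (u g) - zd, ι v⟫) :
    ∀ g₁ g₂ : H,
      ⟪ι (p g₂) - ι (p g₁), g₂ - g₁⟫ = ‖ι (u g₂) - ι (u g₁)‖ ^ 2 ∧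
      (0 : ℝ) ≤ ⟪ι (p g₂) - ι (p g₁), g₂ - g₁⟫ := by
  intro g₁ g₂
  have hw : u g₂ - u g₁ ∈ V₀ := by
    have := V₀.sub_mem (hu_mem g₂) (hu_mem g₁)
    simpa using this
  have hq : p g₂ - p g₁ ∈ V₀ := V₀.sub_mem (hp_mem g₂) (hp_mem g₁)
  -- state difference equation
  have hstate : ∀ v ∈ V₀, a (u g₂ - u g₁) v = ⟪g₂ - g₁, ι v⟫ := by
    intro v hv
    have h2 := hu_eq g₂ v hv
    have h1 := hu_eq g₁ v hv
    simp only [map_sub, LinearMap.sub_apply]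
    rw [h1, h2, inner_sub_left]
    ring
  have hadj : ∀ v ∈ V₀, a (p g₂ - p g₁) v = ⟪ι (u g₂) - ι (u g₁), ι v⟫ := by
    intro v hv
    have h2 := hp_eq g₂ v hv
    have h1 := hp_eq g₁ v hv
    simp only [map_sub, LinearMap.sub_apply]
    rw [h1, h2, inner_sub_left, inner_sub_left, inner_sub_left]
    ring
  have key : ⟪ι (p g₂) - ι (p g₁), g₂ - g₁⟫ = ‖ι (u g₂) - ι (u g₁)‖ ^ 2 := by
    have e1 : ⟪g₂ - g₁, ι (p g₂ - p g₁)⟫ = a (u g₂ - u g₁) (p g₂ - p g₁) :=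
      (hstate _ hq).symm
    have e2 : a (p g₂ - p g₁) (u g₂ - u g₁) = ⟪ι (u g₂) - ι (u g₁), ι (u g₂ - u g₁)⟫ :=
      hadj _ hw
    calc ⟪ι (p g₂) - ι (p g₁), g₂ - g₁⟫
        = ⟪g₂ - g₁, ι (p g₂ - p g₁)⟫ := by
          rw [real_inner_comm]; simp [map_sub]
      _ = a (p g₂ - p g₁) (u g₂ - u g₁) := by rw [e1, ha_symm]
      _ = ⟪ι (u g₂) - ι (u g₁), ι (u g₂) - ι (u g₁)⟫ := by rw [e2]; simp [map_sub]
      _ = ‖ι (u g₂) - ι (u g₁)‖ ^ 2 := real_inner_self_eq_norm_sq _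
  exact ⟨key, key ▸ sq_nonneg _⟩
end

section
/- Let a be a continuous symmetric bilinear form on V, coercive on the closed subspace V₀ with constant λ > 0, and let a_α(u,v) = a(u,v) + α B(u,v) for α > 0, where B is a continuous symmetric positive-semidefinite bilinear form with V₀ ⊆ ker B (i.e. B(v,w) = 0 whenever v ∈ V₀). Suppose u ∈ b + V₀ satisfies a(u,v) = F(v) for all v ∈ V₀ and u_α ∈ V satisfies a_α(u_α, v) = F(v) + α B(b, v) for all v ∈ V, for a fixed bounded linear functional F. If additionally a_α is coercive on V with constant λ_α ≥ λ₁ min(1, α) > 0 and u_α ⇀ u weakly in V with B(u_α - b, u_α - b) → 0 as α → ∞, then ‖u_α - u‖_V → 0 strongly as α → +∞. -/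
open scoped RealInnerProductSpace

/-- strong convergence `u_α → u` in `V` as `α → +∞`, given weak
convergence and vanishing of the penalization term. -/
theorem strong_convergence_of_states
    {V : Type*} [NormedAddCommGroup V] [InnerProductSpace ℝ V] [CompleteSpace V]
    (V₀ : Submodule ℝ V) (hV₀ : IsClosed (V₀ : Set V))
    (b : V) (l l₁ : ℝ) (hl : 0 < l) (hl₁ : 0 < l₁)
    (a : V →ₗ[ℝ] V →ₗ[ℝ] ℝ) (Ca : ℝ)
    (ha_cont : ∀ u v : V, |a u v| ≤ Ca * ‖u‖ * ‖v‖)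
    (ha_symm : ∀ u v : V, a u v = a v u)
    (ha_coerc : ∀ v ∈ V₀, l * ‖v‖ ^ 2 ≤ a v v)
    (B : V →ₗ[ℝ] V →ₗ[ℝ] ℝ) (CB : ℝ)
    (hB_cont : ∀ u v : V, |B u v| ≤ CB * ‖u‖ * ‖v‖)
    (hB_symm : ∀ u v : V, B u v = B v u)
    (hB_pos : ∀ v : V, 0 ≤ B v v)
    (hB_ker : ∀ v ∈ V₀, ∀ w : V, B v w = 0)
    (F : V →L[ℝ] ℝ)
    (u : V) (hu_mem : u - b ∈ V₀)
    (hu_eq : ∀ v ∈ V₀, a u v = F v)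
    (uα : ℝ → V)
    (huα_eq : ∀ α : ℝ, 0 < α → ∀ v : V,
      a (uα α) v + α * B (uα α) v = F v + α * B b v)
    (ha_coerc' : ∀ α : ℝ, 0 < α → ∀ v : V,
      l₁ * min 1 α * ‖v‖ ^ 2 ≤ a v v + α * B v v)
    (hweak : ∀ v : V,
      Filter.Tendsto (fun α => ⟪uα α, v⟫) Filter.atTop (nhds ⟪u, v⟫))
    (hpen : Filter.Tendsto (fun α => B (uα α - b) (uα α - b))
      Filter.atTop (nhds 0)) :
    Filter.Tendsto (fun α => ‖uα α - u‖) Filter.atTop (nhds 0) := by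
  classical
  -- the bounded linear functional g = F - a(u, ·)
  set g : V →L[ℝ] ℝ :=
    F - LinearMap.mkContinuous (a u) (Ca * ‖u‖)
      (fun v => by simpa [Real.norm_eq_abs, mul_assoc] using ha_cont u v) with hg
  have hg_apply : ∀ v : V, g v = F v - a u v := fun v => rfl
  -- Riesz representer of g
  set w : V := (InnerProductSpace.toDual ℝ V).symm g with hwdef
  have hw : ∀ v : V, g v = ⟪v, w⟫ := by
    intro v
    rw [real_inner_comm]
    exact (InnerProductSpace.toDual_symm_apply).symm
  -- g(uα α - u) → 0
  have hgu : Filter.Tendsto (fun α => g (uα α - u)) Filter.atTop (nhds 0) := by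
    have h1 : Filter.Tendsto (fun α => ⟪uα α, w⟫ - ⟪u, w⟫) Filter.atTop (nhds 0) := by
      simpa using (hweak w).sub_const ⟪u, w⟫
    have : (fun α => g (uα α - u)) = fun α => ⟪uα α, w⟫ - ⟪u, w⟫ := by
      funext α
      rw [hw, inner_sub_left]
    rw [this]; exact h1
  -- key inequality for α ≥ 1
  have key : ∀ α : ℝ, 1 ≤ α → l₁ * ‖uα α - u‖ ^ 2 ≤ g (uα α - u) := by
    intro α hα
    have hαpos : (0 : ℝ) < α := lt_of_lt_of_le one_pos hα
    have hcoerc := ha_coerc' α hαpos (uα α - u)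
    rw [min_eq_left hα, mul_one] at hcoerc
    have heq : a (uα α - u) (uα α - u) + α * B (uα α - u) (uα α - u)
        = g (uα α - u) := by
      have hB_ub : ∀ y : V, B u y = B b y := by
        intro y
        have h0 := hB_ker (u - b) hu_mem y
        have : B u y - B b y = 0 := by
          simpa [map_sub, LinearMap.sub_apply] using h0
        linarith
      have hveq := huα_eq α hαpos (uα α - u)
      have hexp : a (uα α - u) (uα α - u) = a (uα α) (uα α - u) - a u (uα α - u) := by
        simp [map_sub, LinearMap.sub_apply]; ring
      have hexpB : B (uα α - u) (uα α - u) = B (uα α) (uα α - u) - B b (uα α - u) := by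
        rw [← hB_ub]
        simp [map_sub, LinearMap.sub_apply]; ring
      rw [hexp, hexpB, hg_apply]
      nlinarith [hveq]
    linarith [heq ▸ hcoerc]
  -- squeeze: ‖uα α - u‖² → 0
  have hsq : Filter.Tendsto (fun α => ‖uα α - u‖ ^ 2) Filter.atTop (nhds 0) := by
    apply squeeze_zero' (Filter.Eventually.of_forall fun α => by positivity)
      (g := fun α => g (uα α - u) / l₁)
    · filter_upwards [Filter.eventually_ge_atTop (1 : ℝ)] with α hα
      have := key α hα
      rw [le_div_iff₀ hl₁]
      linarith
    · simpa using hgu.div_const l₁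
  -- conclude
  have : (fun α => ‖uα α - u‖) = fun α => Real.sqrt (‖uα α - u‖ ^ 2) := by
    funext α; rw [Real.sqrt_sq (norm_nonneg _)]
  rw [this]
  have := (Real.continuous_sqrt.tendsto 0).comp hsq
  rw [Real.sqrt_zero] at this; exact this
end
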